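/- The adjoint of 𝗁_{φ,ψ}^α = S_ψ^{1/2} H_{φ,ψ}^α S_φ^{1/2} equals 𝗁_{ψ,φ}^{ᾱ} = S_φ^{1/2} H_{ψ,φ}^{ᾱ} S_ψ^{1/2}. -/

import Mathlib

noncomputable section

open ContinuousLinearMap

local notation "⟪" x ", " y "⟫" => @inner ℂ _ _ x y

theorem adjoint_of_h
    {H : Type*} [NormedAddCommGroup H] [InnerProductSpace ℂ H] [CompleteSpace H]
    (e : HilbertBasis ℕ ℂ H) (T : H ≃L[ℂ] H) (φ ψ : ℕ → H)
    (hφ : ∀ n, φ n = T (e n))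
    (hψ : ∀ n, ψ n = adjoint (T.symm : H →L[ℂ] H) (e n)) (α : ℕ → ℂ)
    (Sφhalf Sψhalf : H →L[ℂ] H)
    (hSφhalf : Sφhalf.IsPositive)
    (hSψhalf : Sψhalf.IsPositive)
    (hSφsq : Sφhalf * Sφhalf = (T : H →L[ℂ] H) * adjoint (T : H →L[ℂ] H))
    (hSψsq : Sψhalf * Sψhalf = adjoint (T.symm : H →L[ℂ] H) * (T.symm : H →L[ℂ] H)) :
    ∀ g h : H,
      (∀ f k : H, HasSum (fun n => (α n * ⟪ψ n, Sφhalf f⟫) • φ n) k →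
          ⟪g, Sψhalf k⟫ = ⟪h, f⟫) ↔
        ∃ k : H, HasSum (fun n => ((starRingEnd ℂ) (α n) * ⟪φ n, Sψhalf g⟫) • ψ n) k ∧
          Sφhalf k = h := by
  intro g h
  -- self-adjointness
  have hφsa : ContinuousLinearMap.adjoint Sφhalf = Sφhalf := hSφhalf.isSelfAdjoint
  have hψsa : ContinuousLinearMap.adjoint Sψhalf = Sψhalf := hSψhalf.isSelfAdjoint
  have innφ : ∀ x y : H, ⟪Sφhalf x, y⟫ = ⟪x, Sφhalf y⟫ := fun x y => by
    conv_lhs => rw [← hφsa]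
    exact ContinuousLinearMap.adjoint_inner_left Sφhalf y x
  have innψ : ∀ x y : H, ⟪Sψhalf x, y⟫ = ⟪x, Sψhalf y⟫ := fun x y => by
    conv_lhs => rw [← hψsa]
    exact ContinuousLinearMap.adjoint_inner_left Sψhalf y x
  -- adjoint composition identities
  have hc1 : (ContinuousLinearMap.adjoint (T.symm : H →L[ℂ] H)).comp
      (ContinuousLinearMap.adjoint (T : H →L[ℂ] H)) = ContinuousLinearMap.id ℂ H := by
    rw [← ContinuousLinearMap.adjoint_comp, T.coe_comp_coe_symm, ContinuousLinearMap.adjoint_id]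
  have hc2 : (ContinuousLinearMap.adjoint (T : H →L[ℂ] H)).comp
      (ContinuousLinearMap.adjoint (T.symm : H →L[ℂ] H)) = ContinuousLinearMap.id ℂ H := by
    rw [← ContinuousLinearMap.adjoint_comp, T.coe_symm_comp_coe, ContinuousLinearMap.adjoint_id]
  -- Sφhalf is bijective
  have hSφsq' : ∀ x : H, Sφhalf (Sφhalf x) = T (ContinuousLinearMap.adjoint (T : H →L[ℂ] H) x) :=
    fun x => by
      have := congrArg (fun (A : H →L[ℂ] H) => A x) hSφsq
      simpa using this
  have hinj : LinearMap.ker (Sφhalf : H →ₗ[ℂ] H) = ⊥ := by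
    rw [LinearMap.ker_eq_bot']
    intro x hx
    rw [ContinuousLinearMap.coe_coe] at hx
    have h1 : Sφhalf (Sφhalf x) = 0 := by rw [hx]; simp
    rw [hSφsq' x] at h1
    have h2 : ContinuousLinearMap.adjoint (T : H →L[ℂ] H) x = 0 := by
      have := congrArg T.symm h1
      simpa using this
    have h4 := congrArg (fun (A : H →L[ℂ] H) => A x) hc1
    simp only [ContinuousLinearMap.comp_apply, ContinuousLinearMap.id_apply, h2,
      map_zero] at h4
    exact h4.symm
  have hsurj : LinearMap.range (Sφhalf : H →ₗ[ℂ] H) = ⊤ := by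
    rw [LinearMap.range_eq_top]
    intro y
    refine ⟨Sφhalf (ContinuousLinearMap.adjoint (T.symm : H →L[ℂ] H) (T.symm y)), ?_⟩
    rw [ContinuousLinearMap.coe_coe]
    rw [hSφsq']
    have h4 := congrArg (fun (A : H →L[ℂ] H) => A (T.symm y)) hc2
    simp only [ContinuousLinearMap.comp_apply, ContinuousLinearMap.id_apply] at h4
    rw [h4]
    simp
  set E := ContinuousLinearEquiv.ofBijective Sφhalf hinj hsurj with hE
  have hEapp : ∀ x : H, E x = Sφhalf x := fun x => by
    rw [hE, ContinuousLinearEquiv.coeFn_ofBijective]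
  have hEsymm : ∀ y : H, Sφhalf (E.symm y) = y := fun y => by
    rw [← hEapp]; exact E.apply_symm_apply y
  constructor
  · -- forward direction
    intro H1
    set x := ContinuousLinearMap.adjoint (T : H →L[ℂ] H) (E.symm h) with hx
    have hb : ∀ m, (starRingEnd ℂ) (α m) * ⟪φ m, Sψhalf g⟫ = ⟪e m, x⟫ := by
      intro m
      set f := E.symm (T (e m)) with hf
      have hSf : Sφhalf f = T (e m) := hEsymm _
      have hone : ⟪e m, e m⟫ = 1 := by
        rw [@inner_self_eq_norm_sq_to_K ℂ, e.orthonormal.1 m]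
        norm_num
      have hterm : (fun n => (α n * ⟪ψ n, Sφhalf f⟫) • φ n)
          = fun n => if n = m then α m • φ m else 0 := by
        funext n
        rw [hSf, hψ n, ContinuousLinearMap.adjoint_inner_left]
        simp only [ContinuousLinearEquiv.coe_coe, T.symm_apply_apply]
        by_cases hnm : n = m
        · subst hnm
          rw [if_pos rfl, hone, mul_one]
        · rw [if_neg hnm, e.orthonormal.2 hnm, mul_zero, zero_smul]
      have hsum : HasSum (fun n => (α n * ⟪ψ n, Sφhalf f⟫) • φ n) (α m • φ m) := by
        rw [hterm]
        exact hasSum_ite_eq m (α m • φ m)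
      have heq := H1 f (α m • φ m) hsum
      have heq2 : α m * ⟪g, Sψhalf (φ m)⟫ = ⟪h, f⟫ := by
        rw [← heq, map_smul, inner_smul_right]
      have heq3 := congrArg (starRingEnd ℂ) heq2
      rw [map_mul, inner_conj_symm (Sψhalf (φ m)) g] at heq3
      calc (starRingEnd ℂ) (α m) * ⟪φ m, Sψhalf g⟫
          = (starRingEnd ℂ) (α m) * ⟪Sψhalf (φ m), g⟫ := by rw [innψ]
        _ = (starRingEnd ℂ) ⟪h, f⟫ := heq3
        _ = ⟪f, h⟫ := inner_conj_symm f h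
        _ = ⟪f, Sφhalf (E.symm h)⟫ := by rw [hEsymm]
        _ = ⟪Sφhalf f, E.symm h⟫ := (innφ _ _).symm
        _ = ⟪T (e m), E.symm h⟫ := by rw [hSf]
        _ = ⟪e m, x⟫ := by
            rw [hx, ContinuousLinearMap.adjoint_inner_right]
            rfl
    have hrepr : HasSum (fun n => ⟪e n, x⟫ • e n) x := by
      simpa only [e.repr_apply_apply] using e.hasSum_repr x
    have hmap := hrepr.mapL (ContinuousLinearMap.adjoint (T.symm : H →L[ℂ] H))
    refine ⟨ContinuousLinearMap.adjoint (T.symm : H →L[ℂ] H) x, ?_, ?_⟩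
    · have hfun : (fun n => ((starRingEnd ℂ) (α n) * ⟪φ n, Sψhalf g⟫) • ψ n)
          = fun n => ContinuousLinearMap.adjoint (T.symm : H →L[ℂ] H) (⟪e n, x⟫ • e n) := by
        funext n
        rw [map_smul, ← hψ n, hb n]
      rw [hfun]
      exact hmap
    · have h4 := congrArg (fun (A : H →L[ℂ] H) => A (E.symm h)) hc1
      simp only [ContinuousLinearMap.comp_apply, ContinuousLinearMap.id_apply] at h4
      rw [hx, h4, hEsymm]
  · -- backward direction
    rintro ⟨k, hk, hSk⟩ f k' hk'
    have h1 : HasSum (fun n => ⟪Sψhalf g, (α n * ⟪ψ n, Sφhalf f⟫) • φ n⟫) ⟪Sψhalf g, k'⟫ :=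
      hk'.mapL (innerSL ℂ (Sψhalf g))
    have h2 : HasSum
        (fun n => ⟪Sφhalf f, ((starRingEnd ℂ) (α n) * ⟪φ n, Sψhalf g⟫) • ψ n⟫)
        ⟪Sφhalf f, k⟫ := hk.mapL (innerSL ℂ (Sφhalf f))
    have h3 : HasSum
        (fun n => (starRingEnd ℂ) ⟪Sφhalf f, ((starRingEnd ℂ) (α n) * ⟪φ n, Sψhalf g⟫) • ψ n⟫)
        ((starRingEnd ℂ) ⟪Sφhalf f, k⟫) := h2.star
    have hfun : (fun n => (starRingEnd ℂ)
          ⟪Sφhalf f, ((starRingEnd ℂ) (α n) * ⟪φ n, Sψhalf g⟫) • ψ n⟫)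
        = fun n => ⟪Sψhalf g, (α n * ⟪ψ n, Sφhalf f⟫) • φ n⟫ := by
      funext n
      simp only [inner_smul_right, map_mul, RingHomCompTriple.comp_apply,
        RingHom.id_apply, inner_conj_symm, starRingEnd_self_apply]
      ring
    rw [hfun] at h3
    have hkey : ⟪Sψhalf g, k'⟫ = (starRingEnd ℂ) ⟪Sφhalf f, k⟫ := h1.unique h3
    calc ⟪g, Sψhalf k'⟫ = ⟪Sψhalf g, k'⟫ := (innψ g k').symm
      _ = (starRingEnd ℂ) ⟪Sφhalf f, k⟫ := hkey
      _ = ⟪k, Sφhalf f⟫ := inner_conj_symm _ _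
      _ = ⟪Sφhalf k, f⟫ := (innφ k f).symm
      _ = ⟪h, f⟫ := by rw [hSk]
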